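/- For all integers k ≥ 2, n, m ≥ 1 and every valid configuration q = (a,b,∅) there exists a gadget INIT, i.e. a pair of finite vertex-colored graphs (INIT_S, INIT_D), whose boundary consists of an output block of y-vertices y^i_j (Spoiler side: i ∈ [k], j ∈ [n]; Duplicator side: i ∈ [k], j ∈ {0,…,m}; colored per block, matched between the two sides) such that in the existential (k+1)-pebble game on (INIT_S, INIT_D): (i) Spoiler can reach the position 'q on y' from the empty position; (ii) Duplicator has a winning strategy I with boundary function h^y_q on the output block; and (iii) for every configuration q' (valid or invalid) Duplicator has a critical strategy I_{q'} with boundary function h^y_{q'} on the output block such that crit(I_{q'}) ⊆ I. -/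

import Mathlib

/-- A vertex-colored (finite simple) graph on vertex type `V` with colors in `C`. -/
structure ColoredGraph (V : Type) (C : Type) where
  graph : SimpleGraph V
  color : V → C

namespace PebbleCG

variable {α β C : Type}

/-- A finite set of pairs is a partial map if it is functional. -/
def Functional (p : Finset (α × β)) : Prop :=
  ∀ ⦃x : α⦄ ⦃y y' : β⦄, (x, y) ∈ p → (x, y') ∈ p → y = y'

/-- `p` is a partial homomorphism between the vertex-colored graphs `A` and `B`:
a partial map that preserves colors and maps edges to edges. -/
def PartialHom (A : ColoredGraph α C) (B : ColoredGraph β C) (p : Finset (α × β)) : Prop :=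
  Functional p ∧
  (∀ ⦃x y⦄, (x, y) ∈ p → B.color y = A.color x) ∧
  (∀ ⦃x y x' y'⦄, (x, y) ∈ p → (x', y') ∈ p → A.graph.Adj x x' → B.graph.Adj y y')

/-- Spoiler wins the existential `K`-pebble game played on the vertex sets `S` of `A`
and `D` of `B`, starting from position `p` (after finitely many rounds): either the
position is already not a partial homomorphism, or Spoiler can pick up pebbles and place
a free pebble on some `x ∈ S` so that he wins against every answer `b ∈ D`. -/
inductive SpoilerWins [DecidableEq α] [DecidableEq β]
    (A : ColoredGraph α C) (B : ColoredGraph β C)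
    (S : Set α) (D : Set β) (K : ℕ) : Finset (α × β) → Prop
  | win {p : Finset (α × β)} :
      ¬ PartialHom A B p → SpoilerWins A B S D K p
  | move {p : Finset (α × β)} (p' : Finset (α × β)) (x : α) :
      p' ⊆ p → p'.card < K → x ∈ S →
      (∀ b ∈ D, SpoilerWins A B S D K (insert (x, b) p')) →
      SpoilerWins A B S D K p

/-- `SpoilerReach A B S D K p q`: starting from position `p`, Spoiler has a strategy in
the existential `K`-pebble game (played on the vertex sets `S` and `D`) guaranteeing
that after finitely many rounds he has either won or reached exactly the position `q`. -/
inductive SpoilerReach [DecidableEq α] [DecidableEq β]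
    (A : ColoredGraph α C) (B : ColoredGraph β C)
    (S : Set α) (D : Set β) (K : ℕ) : Finset (α × β) → Finset (α × β) → Prop
  | refl {p : Finset (α × β)} : SpoilerReach A B S D K p p
  | win {p q : Finset (α × β)} :
      ¬ PartialHom A B p → SpoilerReach A B S D K p q
  | move {p q : Finset (α × β)} (p' : Finset (α × β)) (x : α) :
      p' ⊆ p → p'.card < K → x ∈ S →
      (∀ b ∈ D, SpoilerReach A B S D K (insert (x, b) p') q) →
      SpoilerReach A B S D K p q

/-- `H` together with the set `crit ⊆ H` of critical positions is a critical strategy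
for Duplicator in the existential `K`-pebble game on the vertex-colored graphs `A`
(restricted to `S`) and `B` (restricted to `D`).  If `crit = ∅` it is a winning
strategy. -/
structure IsCriticalStrategy [DecidableEq α] [DecidableEq β]
    (A : ColoredGraph α C) (B : ColoredGraph β C)
    (S : Set α) (D : Set β) (K : ℕ)
    (H crit : Set (Finset (α × β))) : Prop where
  nonempty : H.Nonempty
  crit_subset : crit ⊆ H
  mem_SD : ∀ p ∈ H, ∀ z ∈ p, Prod.fst z ∈ S ∧ Prod.snd z ∈ D
  isHom : ∀ p ∈ H, PartialHom A B p
  crit_card : ∀ p ∈ crit, p.card = K - 1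
  downward : ∀ p ∈ H, ∀ q ⊆ p, q ∈ H
  extend : ∀ g ∈ H, g ∉ crit → g.card < K → ∀ x ∈ S, ∃ b ∈ D, insert (x, b) g ∈ H

/-- The family `H` of positions has boundary function `f` on the (Spoiler-side) boundary
`bS`: every position of `H` agrees with `f` on boundary vertices in its domain. -/
def HasBoundaryFun (H : Set (Finset (α × β))) (bS : Set α) (f : α → β) : Prop :=
  ∀ h ∈ H, ∀ z ∈ bS, ∀ y : β, (z, y) ∈ h → y = f z

end PebbleCG

/-- The Spoiler-side output `y`-block: vertices `y^i_j = (1, i, j)`, `i ∈ [1,k]`,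
`j ∈ [1,n]`. -/
def initBdryYS (k n : ℕ) : Set (ℕ × ℕ × ℕ) :=
  {v | v.1 = 1 ∧ 1 ≤ v.2.1 ∧ v.2.1 ≤ k ∧ 1 ≤ v.2.2 ∧ v.2.2 ≤ n}

/-- The Duplicator-side output `y`-block: vertices `y^i_j = (1, i, j, 0)`, `i ∈ [1,k]`,
`0 ≤ j ≤ m`. -/
def initBdryYD (k m : ℕ) : Set (ℕ × ℕ × ℕ × ℕ) :=
  {v | v.1 = 1 ∧ 1 ≤ v.2.1 ∧ v.2.1 ≤ k ∧ v.2.2.1 ≤ m ∧ v.2.2.2 = 0}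

open Classical in
/-- The map `h^y_q` for the configuration `q = (a, b, T)` on the output block: it sends
`y^i_{a(i)}` to `y^i_{b(i)}` for `i ∉ T`, and every other `y^i_j` to `y^i_0`. -/
noncomputable def hyInit (a b : ℕ → ℕ) (T : Set ℕ) : ℕ × ℕ × ℕ → ℕ × ℕ × ℕ × ℕ :=
  fun v => if v.2.2 = a v.2.1 ∧ v.2.1 ∉ T then (v.1, v.2.1, b v.2.1, 0)
           else (v.1, v.2.1, 0, 0)

namespace InitGadget
open PebbleCG

abbrev V3 := ℕ × ℕ × ℕ
abbrev V4 := ℕ × ℕ × ℕ × ℕ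

def xv : V3 := (0,0,0)
def zv (l : ℕ) : V3 := (0,l,0)
def ysv (i j : ℕ) : V3 := (1,i,j)
def T1 : V4 := (0,0,0,0)
def Ga (c : ℕ) : V4 := (0,0,1,c)
def Vv (l c : ℕ) : V4 := (0,l,c,0)
def ydv (i j : ℕ) : V4 := (1,i,j,0)

variable (k n m : ℕ) (a b : ℕ → ℕ)

def SSet : Set V3 :=
  {v | (∃ l, l ≤ k+1 ∧ v = zv l) ∨ v ∈ initBdryYS k n}

def DSet : Set V4 :=
  {v | v = T1 ∨ (∃ c, 1 ≤ c ∧ c ≤ k ∧ v = Ga c) ∨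
       (∃ l c, 1 ≤ l ∧ l ≤ k+1 ∧ c ≤ k ∧ v = Vv l c) ∨ v ∈ initBdryYD k m}

def Srule (u v : V3) : Prop :=
  (u.1 = 0 ∧ v.1 = 0) ∨ (u = xv ∧ v.1 = 1 ∧ v.2.2 = a v.2.1)

def Sadj (u v : V3) : Prop :=
  u ∈ SSet k n ∧ v ∈ SSet k n ∧ u ≠ v ∧ (Srule a u v ∨ Srule a v u)

def Drule (u v : V4) : Prop :=
  (u = T1 ∧ ∃ l c, 1 ≤ l ∧ v = Vv l c) ∨
  (∃ c l c', u = Ga c ∧ v = Vv l c' ∧ 1 ≤ l ∧ (c' = 0 ∨ c' ≠ c)) ∨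
  (∃ l c l' c', u = Vv l c ∧ v = Vv l' c' ∧ 1 ≤ l ∧ 1 ≤ l' ∧ l ≠ l' ∧
     ¬(c = 0 ∧ c' = 0) ∧ (c = 0 ∨ c' = 0 ∨ c ≠ c')) ∨
  (u = T1 ∧ ∃ i, v = ydv i (b i)) ∨
  (∃ c i j, u = Ga c ∧ v = ydv i j)

def Dadj (u v : V4) : Prop :=
  u ∈ DSet k m ∧ v ∈ DSet k m ∧ u ≠ v ∧ (Drule b u v ∨ Drule b v u)

def GS : ColoredGraph V3 (ℕ × ℕ) where
  graph := { Adj := Sadj k n a,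
             symm := by
               refine ⟨?_⟩; rintro u v ⟨h1, h2, h3, h4⟩
               exact ⟨h2, h1, h3.symm, h4.symm⟩,
             loopless := by refine ⟨?_⟩; rintro v ⟨h1, h2, h3, h4⟩; exact h3 rfl }
  color := fun v => (v.1, v.2.1)

def GD : ColoredGraph V4 (ℕ × ℕ) where
  graph := { Adj := Dadj k m b,
             symm := by
               refine ⟨?_⟩; rintro u v ⟨h1, h2, h3, h4⟩
               exact ⟨h2, h1, h3.symm, h4.symm⟩,
             loopless := by refine ⟨?_⟩; rintro v ⟨h1, h2, h3, h4⟩; exact h3 rfl }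
  color := fun v => (v.1, v.2.1)

end InitGadget

namespace InitGadget
open PebbleCG

variable {k n m : ℕ} {a b : ℕ → ℕ}

lemma mem_SSet_xv : xv ∈ SSet k n := Or.inl ⟨0, by omega, rfl⟩
lemma mem_SSet_zv {l : ℕ} (h : l ≤ k+1) : zv l ∈ SSet k n := Or.inl ⟨l, h, rfl⟩
lemma mem_SSet_ysv {i j : ℕ} (h1 : 1 ≤ i) (h2 : i ≤ k) (h3 : 1 ≤ j) (h4 : j ≤ n) :
    ysv i j ∈ SSet k n := Or.inr ⟨rfl, h1, h2, h3, h4⟩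

lemma mem_DSet_T1 : T1 ∈ DSet k m := Or.inl rfl
lemma mem_DSet_Ga {c : ℕ} (h1 : 1 ≤ c) (h2 : c ≤ k) : Ga c ∈ DSet k m :=
  Or.inr (Or.inl ⟨c, h1, h2, rfl⟩)
lemma mem_DSet_Vv {l c : ℕ} (h1 : 1 ≤ l) (h2 : l ≤ k+1) (h3 : c ≤ k) : Vv l c ∈ DSet k m :=
  Or.inr (Or.inr (Or.inl ⟨l, c, h1, h2, h3, rfl⟩))
lemma mem_DSet_ydv {i j : ℕ} (h1 : 1 ≤ i) (h2 : i ≤ k) (h3 : j ≤ m) : ydv i j ∈ DSet k m :=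
  Or.inr (Or.inr (Or.inr ⟨rfl, h1, h2, h3, rfl⟩))

-- shape disequalities
lemma T1_ne_Vv {l c : ℕ} (h : 1 ≤ l) : T1 ≠ Vv l c := by
  simp [T1, Vv, Prod.ext_iff]; omega
lemma Ga_ne_Vv {c l c' : ℕ} (h : 1 ≤ l) : Ga c ≠ Vv l c' := by
  simp [Ga, Vv, Prod.ext_iff]; omega
lemma Vv_ne_Vv {l c l' c' : ℕ} (h : l ≠ l') : Vv l c ≠ Vv l' c' := by
  simp [Vv, Prod.ext_iff]; omega
lemma T1_ne_ydv {i j : ℕ} : T1 ≠ ydv i j := by simp [T1, ydv, Prod.ext_iff]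
lemma Ga_ne_ydv {c i j : ℕ} : Ga c ≠ ydv i j := by simp [Ga, ydv, Prod.ext_iff]

-- positive S-adjacency
lemma Sadj_xz {l : ℕ} (h1 : 1 ≤ l) (h2 : l ≤ k+1) : Sadj k n a xv (zv l) :=
  ⟨mem_SSet_xv, mem_SSet_zv h2, by simp [xv, zv, Prod.ext_iff]; omega,
   Or.inl (Or.inl ⟨rfl, rfl⟩)⟩
lemma Sadj_zz {l l' : ℕ} (h1 : l ≤ k+1) (h2 : l' ≤ k+1) (hne : l ≠ l') :
    Sadj k n a (zv l) (zv l') :=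
  ⟨mem_SSet_zv h1, mem_SSet_zv h2, by simp [zv, Prod.ext_iff]; omega,
   Or.inl (Or.inl ⟨rfl, rfl⟩)⟩
lemma Sadj_xy {i : ℕ} (h1 : 1 ≤ i) (h2 : i ≤ k) (ha1 : 1 ≤ a i) (ha2 : a i ≤ n) :
    Sadj k n a xv (ysv i (a i)) :=
  ⟨mem_SSet_xv, mem_SSet_ysv h1 h2 ha1 ha2, by simp [xv, ysv, Prod.ext_iff],
   Or.inl (Or.inr ⟨rfl, rfl, rfl⟩)⟩

-- positive D-adjacency
lemma Dadj_T1_Vv {l c : ℕ} (h1 : 1 ≤ l) (h2 : l ≤ k+1) (h3 : c ≤ k) :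
    Dadj k m b T1 (Vv l c) :=
  ⟨mem_DSet_T1, mem_DSet_Vv h1 h2 h3, T1_ne_Vv h1, Or.inl (Or.inl ⟨rfl, l, c, h1, rfl⟩)⟩
lemma Dadj_Ga_Vv {c l c' : ℕ} (hc1 : 1 ≤ c) (hc2 : c ≤ k) (h1 : 1 ≤ l) (h2 : l ≤ k+1)
    (h3 : c' ≤ k) (h : c' = 0 ∨ c' ≠ c) : Dadj k m b (Ga c) (Vv l c') :=
  ⟨mem_DSet_Ga hc1 hc2, mem_DSet_Vv h1 h2 h3, Ga_ne_Vv h1,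
   Or.inl (Or.inr (Or.inl ⟨c, l, c', rfl, rfl, h1, h⟩))⟩
lemma Dadj_Vv_Vv {l c l' c' : ℕ} (h1 : 1 ≤ l) (h2 : l ≤ k+1) (h3 : c ≤ k)
    (h1' : 1 ≤ l') (h2' : l' ≤ k+1) (h3' : c' ≤ k) (hll : l ≠ l')
    (hw : ¬(c = 0 ∧ c' = 0)) (hr : c = 0 ∨ c' = 0 ∨ c ≠ c') :
    Dadj k m b (Vv l c) (Vv l' c') :=
  ⟨mem_DSet_Vv h1 h2 h3, mem_DSet_Vv h1' h2' h3', Vv_ne_Vv hll,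
   Or.inl (Or.inr (Or.inr (Or.inl ⟨l, c, l', c', rfl, rfl, h1, h1', hll, hw, hr⟩)))⟩
lemma Dadj_T1_ydv {i : ℕ} (h1 : 1 ≤ i) (h2 : i ≤ k) (h3 : b i ≤ m) :
    Dadj k m b T1 (ydv i (b i)) :=
  ⟨mem_DSet_T1, mem_DSet_ydv h1 h2 h3, T1_ne_ydv,
   Or.inl (Or.inr (Or.inr (Or.inr (Or.inl ⟨rfl, i, rfl⟩))))⟩
lemma Dadj_Ga_ydv {c i j : ℕ} (hc1 : 1 ≤ c) (hc2 : c ≤ k) (h1 : 1 ≤ i) (h2 : i ≤ k)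
    (h3 : j ≤ m) : Dadj k m b (Ga c) (ydv i j) :=
  ⟨mem_DSet_Ga hc1 hc2, mem_DSet_ydv h1 h2 h3, Ga_ne_ydv,
   Or.inl (Or.inr (Or.inr (Or.inr (Or.inr ⟨c, i, j, rfl, rfl⟩))))⟩

-- negative D-adjacency
lemma Drule_elim {u v : V4} (h : Drule b u v) :
    (u = T1 ∧ ∃ l c, 1 ≤ l ∧ v = Vv l c) ∨
    (∃ c l c', u = Ga c ∧ v = Vv l c' ∧ 1 ≤ l ∧ (c' = 0 ∨ c' ≠ c)) ∨
    (∃ l c l' c', u = Vv l c ∧ v = Vv l' c' ∧ 1 ≤ l ∧ 1 ≤ l' ∧ l ≠ l' ∧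
       ¬(c = 0 ∧ c' = 0) ∧ (c = 0 ∨ c' = 0 ∨ c ≠ c')) ∨
    (u = T1 ∧ ∃ i, v = ydv i (b i)) ∨
    (∃ c i j, u = Ga c ∧ v = ydv i j) := h

lemma not_Dadj_Ga_Vv_same {c l : ℕ} (hc : 1 ≤ c) : ¬ Dadj k m b (Ga c) (Vv l c) := by
  rintro ⟨-, -, -, h | h⟩ <;>
  rcases h with ⟨hu, l₀, c₀, hl₀, hv⟩ | ⟨c₀, l₀, c₀', hu, hv, hl₀, hcc⟩ |
    ⟨l₀, c₀, l₀', c₀', hu, hv, hl₀, hl₀', hne, hw, hr⟩ | ⟨hu, i₀, hv⟩ |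
    ⟨c₀, i₀, j₀, hu, hv⟩ <;>
  simp only [T1, Ga, Vv, ydv, Prod.ext_iff] at hu hv <;> omega

lemma not_Dadj_Vv_Vv_same {l l' c : ℕ} (hc : 1 ≤ c) (hl : 1 ≤ l) (hl' : 1 ≤ l') :
    ¬ Dadj k m b (Vv l c) (Vv l' c) := by
  rintro ⟨-, -, -, h | h⟩ <;>
  rcases h with ⟨hu, l₀, c₀, hl₀, hv⟩ | ⟨c₀, l₀, c₀', hu, hv, hl₀, hcc⟩ |
    ⟨l₀, c₀, l₀', c₀', hu, hv, hl₀, hl₀', hne, hw, hr⟩ | ⟨hu, i₀, hv⟩ |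
    ⟨c₀, i₀, j₀, hu, hv⟩ <;>
  simp only [T1, Ga, Vv, ydv, Prod.ext_iff] at hu hv <;> omega

lemma not_Dadj_Vv_Vv_wild {l l' : ℕ} (hl : 1 ≤ l) (hl' : 1 ≤ l') :
    ¬ Dadj k m b (Vv l 0) (Vv l' 0) := by
  rintro ⟨-, -, -, h | h⟩ <;>
  rcases h with ⟨hu, l₀, c₀, hl₀, hv⟩ | ⟨c₀, l₀, c₀', hu, hv, hl₀, hcc⟩ |
    ⟨l₀, c₀, l₀', c₀', hu, hv, hl₀, hl₀', hne, hw, hr⟩ | ⟨hu, i₀, hv⟩ |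
    ⟨c₀, i₀, j₀, hu, hv⟩ <;>
  simp only [T1, Ga, Vv, ydv, Prod.ext_iff] at hu hv <;> omega

lemma not_Dadj_T1_ydv {i j : ℕ} (h : j ≠ b i) : ¬ Dadj k m b T1 (ydv i j) := by
  rintro ⟨-, -, -, hh | hh⟩ <;>
  rcases hh with ⟨hu, l₀, c₀, hl₀, hv⟩ | ⟨c₀, l₀, c₀', hu, hv, hl₀, hcc⟩ |
    ⟨l₀, c₀, l₀', c₀', hu, hv, hl₀, hl₀', hne, hw, hr⟩ | ⟨hu, i₀, hv⟩ |
    ⟨c₀, i₀, j₀, hu, hv⟩ <;>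
  simp only [T1, Ga, Vv, ydv, Prod.ext_iff] at hu hv <;>
  first
  | omega
  | (obtain ⟨-, hi, hj, -⟩ := hv; subst hi; exact h hj)

end InitGadget

namespace InitGadget
open PebbleCG

section generic
variable {α β C : Type} {A : ColoredGraph α C} {B : ColoredGraph β C}

lemma hom_mono {p q : Finset (α × β)} (sub : q ⊆ p) (h : PartialHom A B p) :
    PartialHom A B q :=
  ⟨fun _ _ _ h1 h2 => h.1 (sub h1) (sub h2), fun _ _ h1 => h.2.1 (sub h1),
   fun _ _ _ _ h1 h2 => h.2.2 (sub h1) (sub h2)⟩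

lemma hom_empty : PartialHom A B (∅ : Finset (α × β)) := by
  refine ⟨?_, ?_, ?_⟩ <;> intro x <;> intros <;> simp_all

lemma hom_insert [DecidableEq α] [DecidableEq β] {p : Finset (α × β)}
    (hp : PartialHom A B p) {x : α} {bb : β}
    (hcol : B.color bb = A.color x)
    (hfun : ∀ y, (x, y) ∈ p → y = bb)
    (hadj : ∀ q ∈ p, A.graph.Adj x q.1 → B.graph.Adj bb q.2) :
    PartialHom A B (insert (x, bb) p) := by
  have key : ∀ q ∈ insert (x, bb) p, q = (x, bb) ∨ q ∈ p := fun q hq => Finset.mem_insert.1 hq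
  refine ⟨?_, ?_, ?_⟩
  · intro x0 y y' h1 h2
    rcases key _ h1 with h1' | h1' <;> rcases key _ h2 with h2' | h2'
    · rw [Prod.ext_iff] at h1' h2'; exact h1'.2.trans h2'.2.symm
    · obtain ⟨e1, e2⟩ := Prod.ext_iff.1 h1'
      dsimp at e1 e2; subst e1; rw [e2]; exact (hfun _ h2').symm
    · obtain ⟨e1, e2⟩ := Prod.ext_iff.1 h2'
      dsimp at e1 e2; subst e1; rw [e2]; exact hfun _ h1'
    · exact hp.1 h1' h2'
  · intro x0 y h1
    rcases key _ h1 with h1' | h1'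
    · obtain ⟨e1, e2⟩ := Prod.ext_iff.1 h1'
      dsimp at e1 e2; rw [e1, e2]; exact hcol
    · exact hp.2.1 h1'
  · intro x0 y0 x1 y1 h1 h2 hA
    rcases key _ h1 with h1' | h1' <;> rcases key _ h2 with h2' | h2'
    · obtain ⟨e1, e2⟩ := Prod.ext_iff.1 h1'
      obtain ⟨e3, e4⟩ := Prod.ext_iff.1 h2'
      dsimp at e1 e2 e3 e4
      rw [e1, e3] at hA
      exact absurd hA A.graph.irrefl
    · obtain ⟨e1, e2⟩ := Prod.ext_iff.1 h1'
      dsimp at e1 e2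
      rw [e1] at hA; rw [e2]
      exact hadj (x1, y1) h2' hA
    · obtain ⟨e1, e2⟩ := Prod.ext_iff.1 h2'
      dsimp at e1 e2
      rw [e1] at hA; rw [e2]
      exact (hadj (x0, y0) h1' hA.symm).symm
    · exact hp.2.2 h1' h2' hA

lemma not_hom_edge {p : Finset (α × β)} {x1 y1 x2 y2}
    (h1 : (x1, y1) ∈ p) (h2 : (x2, y2) ∈ p)
    (ha : A.graph.Adj x1 x2) (hb : ¬ B.graph.Adj y1 y2) : ¬ PartialHom A B p :=
  fun h => hb (h.2.2 h1 h2 ha)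

lemma not_hom_color {p : Finset (α × β)} {x y}
    (h : (x, y) ∈ p) (hc : B.color y ≠ A.color x) : ¬ PartialHom A B p :=
  fun hh => hc (hh.2.1 h)

lemma not_hom_fun {p : Finset (α × β)} {x y y'}
    (h1 : (x, y) ∈ p) (h2 : (x, y') ∈ p) (hne : y ≠ y') : ¬ PartialHom A B p :=
  fun hh => hne (hh.1 h1 h2)

end generic

variable {k n m : ℕ} {a b : ℕ → ℕ}

lemma GS_adj {u v : V3} : (GS k n a).graph.Adj u v ↔ Sadj k n a u v := Iff.rfl
lemma GD_adj {u v : V4} : (GD k m b).graph.Adj u v ↔ Dadj k m b u v := Iff.rfl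
lemma GS_color (v : V3) : (GS k n a).color v = (v.1, v.2.1) := rfl
lemma GD_color (v : V4) : (GD k m b).color v = (v.1, v.2.1) := rfl

lemma Sadj_elim {u v : V3} (h : Sadj k n a u v) :
    (u.1 = 0 ∧ v.1 = 0) ∨ (u = xv ∧ v.1 = 1 ∧ v.2.2 = a v.2.1) ∨
    (v = xv ∧ u.1 = 1 ∧ u.2.2 = a u.2.1) := by
  obtain ⟨-, -, -, hr | hr⟩ := h
  · rcases hr with hr | hr
    · exact Or.inl hr
    · exact Or.inr (Or.inl hr)
  · rcases hr with hr | hr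
    · exact Or.inl ⟨hr.2, hr.1⟩
    · exact Or.inr (Or.inr hr)

end InitGadget

namespace InitGadget
open PebbleCG

abbrev Pos := Finset (V3 × V4)

variable (k n m : ℕ) (a b : ℕ → ℕ)

def blindPair (p : V3 × V4) : Prop :=
  ∃ l c, 1 ≤ l ∧ l ≤ k+1 ∧ c ≤ k ∧ p = (zv l, Vv l c)

def bdPair (β : V3 → V4) (p : V3 × V4) : Prop :=
  p.1 ∈ initBdryYS k n ∧ p.2 = β p.1

def famPair (X1 : V4 → Prop) (β : V3 → V4) (p : V3 × V4) : Prop :=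
  (p.1 = xv ∧ X1 p.2) ∨ blindPair k p ∨ bdPair k n β p

def Fam (X1 : V4 → Prop) (β : V3 → V4) : Set Pos :=
  {h | (∀ p ∈ h, famPair k n X1 β p) ∧ PartialHom (GS k n a) (GD k m b) h}

def X1I : V4 → Prop := fun t => t = T1
def X1H (t : V4) : Prop := ∃ c, 1 ≤ c ∧ c ≤ k ∧ t = Ga c

def IFam : Set Pos := Fam k n m a b X1I (hyInit a b ∅)
def HFam (β : V3 → V4) : Set Pos := Fam k n m a b (X1H k) β

def Crit (β : V3 → V4) : Set Pos :=
  {g | g ∈ HFam k n m a b β ∧ g.card = k ∧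
       (∀ p ∈ g, ∃ l c, 1 ≤ l ∧ l ≤ k+1 ∧ 1 ≤ c ∧ c ≤ k ∧ p = (zv l, Vv l c)) ∧
       (∀ c, 1 ≤ c → c ≤ k → ∃ l, (zv l, Vv l c) ∈ g)}

def blockfn (p : V3 × V4) : ℕ :=
  if p.2.1 = 0 ∧ 1 ≤ p.2.2.1 then p.2.2.2.1
  else if p.2.1 = 0 ∧ p.2.2.1 = 0 ∧ p.2.2.2.1 = 1 then p.2.2.2.2 else 0

lemma blockfn_blind {l c : ℕ} (hl : 1 ≤ l) : blockfn (zv l, Vv l c) = c := by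
  simp [blockfn, Vv, zv, hl]
lemma blockfn_Ga {x : V3} {c : ℕ} : blockfn (x, Ga c) = c := by simp [blockfn, Ga]
lemma blockfn_T1 {x : V3} : blockfn (x, T1) = 0 := by simp [blockfn, T1]
lemma blockfn_bd {x : V3} {i j : ℕ} : blockfn (x, ydv i j) = 0 := by simp [blockfn, ydv]

variable {k n m a b}

-- boundary value facts
lemma hyInit_form (a' b' : ℕ → ℕ) (T' : Set ℕ) {v : V3} (hv : v ∈ initBdryYS k n) :
    hyInit a' b' T' v = ydv v.2.1 ((hyInit a' b' T' v).2.2.1) ∧ v.1 = 1 := by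
  obtain ⟨h1, -⟩ := hv
  unfold hyInit
  constructor
  · split <;> simp [ydv, h1]
  · exact h1

lemma hyInit_val_le {a' b' : ℕ → ℕ} {T' : Set ℕ}
    (hb' : ∀ i, 1 ≤ i → i ≤ k → b' i ≤ m) {v : V3} (hv : v ∈ initBdryYS k n) :
    (hyInit a' b' T' v).2.2.1 ≤ m := by
  obtain ⟨h1, h2, h3, -⟩ := hv
  unfold hyInit
  split
  · exact hb' _ h2 h3
  · simp

lemma hyInit_mem_bdD {a' b' : ℕ → ℕ} {T' : Set ℕ}
    (hb' : ∀ i, 1 ≤ i → i ≤ k → b' i ≤ m) {v : V3} (hv : v ∈ initBdryYS k n) :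
    hyInit a' b' T' v ∈ initBdryYD k m := by
  obtain ⟨h1, h2, h3, -⟩ := hv
  have hle : (hyInit a' b' T' v).2.2.1 ≤ m := by
    unfold hyInit
    split
    · exact hb' _ h2 h3
    · simp
  show _ ∧ _
  unfold hyInit at hle ⊢
  split <;> rename_i hc
  · rw [if_pos hc] at hle; exact ⟨h1, h2, h3, hle, rfl⟩
  · rw [if_neg hc] at hle; exact ⟨h1, h2, h3, hle, rfl⟩

lemma hyInit_acol {i : ℕ} :
    hyInit a b ∅ (ysv i (a i)) = ydv i (b i) := by
  unfold hyInit ysv ydv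
  simp

lemma mem_bdD_DSet {v : V4} (h : v ∈ initBdryYD k m) : v ∈ DSet k m :=
  Or.inr (Or.inr (Or.inr h))

lemma mem_bdS_SSet {v : V3} (h : v ∈ initBdryYS k n) : v ∈ SSet k n := Or.inr h

end InitGadget

namespace InitGadget
open PebbleCG

variable {k n m : ℕ} {a b : ℕ → ℕ} {β : V3 → V4} {X1 : V4 → Prop}

def GoodBd (k n m : ℕ) (β : V3 → V4) : Prop :=
  ∀ v ∈ initBdryYS k n, ∃ j, j ≤ m ∧ β v = ydv v.2.1 j

lemma goodBd_hyInit {a' b' : ℕ → ℕ} {T' : Set ℕ}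
    (hb' : ∀ i, 1 ≤ i → i ≤ k → b' i ≤ m) : GoodBd k n m (hyInit a' b' T') := by
  intro v hv
  exact ⟨(hyInit a' b' T' v).2.2.1, hyInit_val_le hb' hv, (hyInit_form a' b' T' hv).1⟩

lemma Sadj_symm {u v : V3} (h : Sadj k n a u v) : Sadj k n a v u :=
  ⟨h.2.1, h.1, h.2.2.1.symm, h.2.2.2.symm⟩
lemma Dadj_symm {u v : V4} (h : Dadj k m b u v) : Dadj k m b v u :=
  ⟨h.2.1, h.1, h.2.2.1.symm, h.2.2.2.symm⟩

-- shape lemmas for family members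
lemma fam_x_pair {g : Pos} (hg : g ∈ Fam k n m a b X1 β) {p : V3 × V4}
    (hp : p ∈ g) (hx : p.1 = xv) : X1 p.2 := by
  rcases hg.1 p hp with ⟨-, h⟩ | ⟨l, c, hl, -, -, hpe⟩ | ⟨hmem, -⟩
  · exact h
  · rw [hpe] at hx
    simp only [xv, zv, Prod.ext_iff] at hx; omega
  · rw [hx] at hmem; exact absurd hmem.1 (by simp [xv])

lemma fam_z_pair {g : Pos} (hg : g ∈ Fam k n m a b X1 β) {p : V3 × V4}
    (hp : p ∈ g) {l : ℕ} (hl : 1 ≤ l) (hx : p.1 = zv l) :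
    ∃ c, c ≤ k ∧ p.2 = Vv l c := by
  rcases hg.1 p hp with ⟨hpx, -⟩ | ⟨l', c, hl', -, hck, hpe⟩ | ⟨hmem, -⟩
  · rw [hpx] at hx; simp only [xv, zv, Prod.ext_iff] at hx; omega
  · rw [hpe] at hx
    have he : l' = l := by simpa [zv, Prod.ext_iff] using hx
    subst he
    exact ⟨c, hck, by rw [hpe]⟩
  · rw [hx] at hmem
    exact absurd hmem.1 (by simp [zv])

lemma fam_y_pair {g : Pos} (hg : g ∈ Fam k n m a b X1 β) {p : V3 × V4}
    (hp : p ∈ g) (hx : p.1.1 = 1) : p.1 ∈ initBdryYS k n ∧ p.2 = β p.1 := by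
  rcases hg.1 p hp with ⟨hpx, -⟩ | ⟨l', c, hl', -, hck, hpe⟩ | h
  · rw [hpx] at hx; simp [xv] at hx
  · rw [hpe] at hx; simp [zv] at hx
  · exact h

lemma fam_mem_SD {g : Pos} (hg : g ∈ Fam k n m a b X1 β)
    (hX1D : ∀ t, X1 t → t ∈ DSet k m) (hβ : GoodBd k n m β) {p : V3 × V4}
    (hp : p ∈ g) : p.1 ∈ SSet k n ∧ p.2 ∈ DSet k m := by
  rcases hg.1 p hp with ⟨hpx, ht⟩ | ⟨l, c, hl, hlk, hck, hpe⟩ | ⟨hmem, hpe⟩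
  · exact ⟨hpx ▸ mem_SSet_xv, hX1D _ ht⟩
  · rw [hpe]; exact ⟨mem_SSet_zv hlk, mem_DSet_Vv hl hlk hck⟩
  · obtain ⟨j, hj, he⟩ := hβ p.1 hmem
    refine ⟨mem_bdS_SSet hmem, ?_⟩
    rw [hpe, he]
    exact mem_DSet_ydv hmem.2.1 hmem.2.2.1 hj

lemma fam_downward {g : Pos} (hg : g ∈ Fam k n m a b X1 β) {q : Pos} (hq : q ⊆ g) :
    q ∈ Fam k n m a b X1 β :=
  ⟨fun p hp => hg.1 p (hq hp), hom_mono hq hg.2⟩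

lemma fam_empty : (∅ : Pos) ∈ Fam k n m a b X1 β :=
  ⟨fun p hp => absurd hp (Finset.notMem_empty p), hom_empty⟩

lemma fam_reinsert {g : Pos} (hg : g ∈ Fam k n m a b X1 β) {x : V3} {y : V4}
    (hxy : (x, y) ∈ g) : insert (x, y) g = g := Finset.insert_eq_self.2 hxy

-- boundary extension
lemma fam_bd_extend {g : Pos} (hg : g ∈ Fam k n m a b X1 β) (hβ : GoodBd k n m β)
    {y0 : V3} (hy0 : y0 ∈ initBdryYS k n)
    (HX1bd : ∀ t, X1 t → y0.2.2 = a y0.2.1 → Dadj k m b t (β y0)) :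
    insert (y0, β y0) g ∈ Fam k n m a b X1 β := by
  obtain ⟨j, hj, hform⟩ := hβ y0 hy0
  refine ⟨?_, ?_⟩
  · intro p hp
    rcases Finset.mem_insert.1 hp with hp | hp
    · exact Or.inr (Or.inr ⟨by rw [hp]; exact hy0, by rw [hp]⟩)
    · exact hg.1 p hp
  · refine hom_insert hg.2 ?_ ?_ ?_
    · rw [hform]
      simp [GD_color, GS_color, ydv, hy0.1]
    · intro y' hy'
      exact (fam_y_pair hg hy' hy0.1).2
    · intro q hq hadj
      rcases Sadj_elim hadj with ⟨h1, -⟩ | ⟨h1, -⟩ | ⟨h1, -, h3⟩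
      · rw [hy0.1] at h1; omega
      · rw [h1] at hy0; exact absurd hy0.1 (by simp [xv])
      · exact Dadj_symm (HX1bd q.2 (fam_x_pair hg hq h1) h3)

end InitGadget

namespace InitGadget
open PebbleCG

variable {k n m : ℕ} {a b : ℕ → ℕ} {β : V3 → V4} {X1 : V4 → Prop}

lemma exists_free_val {g : Pos} (hcard : g.card ≤ k) {p₀ : V3 × V4}
    (hp₀ : p₀ ∈ g) (hp₀0 : blockfn p₀ = 0) :
    ∃ c, 1 ≤ c ∧ c ≤ k ∧ ∀ p ∈ g, blockfn p ≠ c := by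
  by_contra h
  push_neg at h
  have hsub : insert 0 (Finset.Icc 1 k) ⊆ g.image blockfn := by
    intro c hc
    rcases Finset.mem_insert.1 hc with rfl | hc
    · exact Finset.mem_image.2 ⟨p₀, hp₀, hp₀0⟩
    · obtain ⟨hc1, hc2⟩ := Finset.mem_Icc.1 hc
      obtain ⟨p, hp, hpc⟩ := h c hc1 hc2
      exact Finset.mem_image.2 ⟨p, hp, hpc⟩
  have h1 : (insert 0 (Finset.Icc 1 k)).card = k + 1 := by
    rw [Finset.card_insert_of_notMem (by simp), Nat.card_Icc]; omega
  have h2 := Finset.card_le_card hsub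
  have h3 := Finset.card_image_le (s := g) (f := blockfn)
  omega

lemma hyInit_acol' {v : V3} (h : v.2.2 = a v.2.1) :
    hyInit a b ∅ v = (v.1, v.2.1, b v.2.1, 0) := by
  unfold hyInit
  rw [if_pos ⟨h, Set.notMem_empty _⟩]

-- x₁ extension for the winning strategy family
lemma Ifam_x1_extend (hwf : ∀ i, 1 ≤ i → i ≤ k → 1 ≤ a i ∧ a i ≤ n ∧ 1 ≤ b i ∧ b i ≤ m)
    {g : Pos} (hg : g ∈ IFam k n m a b) :
    insert (xv, T1) g ∈ IFam k n m a b := by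
  refine ⟨?_, hom_insert hg.2 ?_ ?_ ?_⟩
  · intro p hp
    rcases Finset.mem_insert.1 hp with hp | hp
    · exact Or.inl ⟨by rw [hp], by rw [hp]; rfl⟩
    · exact hg.1 p hp
  · simp [GD_color, GS_color, T1, xv]
  · intro y' hy'
    exact fam_x_pair hg hy' rfl
  · intro q hq hadj
    have hne : xv ≠ q.1 := hadj.2.2.1
    rcases Sadj_elim hadj with ⟨-, hq0⟩ | ⟨-, hq1, hq2⟩ | ⟨-, hxv1, -⟩
    · rcases hg.1 q hq with ⟨hpx, -⟩ | ⟨l, c, h1, h2, h3, hpe⟩ | ⟨hmem, -⟩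
      · exact absurd hpx.symm hne
      · rw [hpe]; exact Dadj_T1_Vv h1 h2 h3
      · rw [hmem.1] at hq0; omega
    · obtain ⟨hmem, hpe⟩ := fam_y_pair hg hq hq1
      have hval : hyInit a b ∅ q.1 = ydv q.1.2.1 (b q.1.2.1) := by
        rw [hyInit_acol' hq2, hmem.1, ydv]
      rw [hpe, hval]
      exact Dadj_T1_ydv hmem.2.1 hmem.2.2.1 (hwf _ hmem.2.1 hmem.2.2.1).2.2.2
    · exact absurd hxv1 (by simp [xv])

-- x₁ extension for the critical strategy family
lemma Hfam_x1_extend (hβ : GoodBd k n m β) {g : Pos}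
    (hg : g ∈ HFam k n m a b β) (hcard : g.card ≤ k)
    (hdom : ∀ y', (xv, y') ∉ g) (hcrit : g ∉ Crit k n m a b β) :
    ∃ c, 1 ≤ c ∧ c ≤ k ∧ insert (xv, Ga c) g ∈ HFam k n m a b β := by
  have hfree : ∃ c, 1 ≤ c ∧ c ≤ k ∧ ∀ p ∈ g, blockfn p ≠ c := by
    by_contra h
    push_neg at h
    apply hcrit
    have hsub : Finset.Icc 1 k ⊆ g.image blockfn := by
      intro c hc
      obtain ⟨hc1, hc2⟩ := Finset.mem_Icc.1 hc
      obtain ⟨p, hp, hpc⟩ := h c hc1 hc2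
      exact Finset.mem_image.2 ⟨p, hp, hpc⟩
    have hIk : (Finset.Icc 1 k).card = k := by rw [Nat.card_Icc]; omega
    have h2 := Finset.card_le_card hsub
    have h3 := Finset.card_image_le (s := g) (f := blockfn)
    have hgk : g.card = k := by omega
    have heq : Finset.Icc 1 k = g.image blockfn :=
      Finset.eq_of_subset_of_card_le hsub (by omega)
    have hNW : ∀ p ∈ g, ∃ l c, 1 ≤ l ∧ l ≤ k+1 ∧ 1 ≤ c ∧ c ≤ k ∧ p = (zv l, Vv l c) := by
      intro p hp
      have hbp : blockfn p ∈ Finset.Icc 1 k := by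
        rw [heq]; exact Finset.mem_image_of_mem _ hp
      rw [Finset.mem_Icc] at hbp
      rcases hg.1 p hp with ⟨hpx, -⟩ | ⟨l, c, h1', h2', h3', hpe⟩ | ⟨hmem, hpe⟩
      · refine absurd ?_ (hdom p.2)
        rw [← hpx]
        simpa using hp
      · have hbv : blockfn p = c := by rw [hpe]; exact blockfn_blind h1'
        exact ⟨l, c, h1', h2', by omega, h3', hpe⟩
      · obtain ⟨j, hj, hform⟩ := hβ p.1 hmem
        have : blockfn p = 0 := by
          have : p = (p.1, β p.1) := by rw [← hpe]
          rw [this, hform]; exact blockfn_bd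
        omega
    refine ⟨hg, hgk, hNW, ?_⟩
    intro c hc1 hc2
    have hcmem : c ∈ g.image blockfn := hsub (Finset.mem_Icc.2 ⟨hc1, hc2⟩)
    obtain ⟨p, hp, hpc⟩ := Finset.mem_image.1 hcmem
    obtain ⟨l, c', hl1, hl2, hc'1, hc'2, hpe⟩ := hNW p hp
    have hc' : c' = c := by
      rw [hpe, blockfn_blind hl1] at hpc; exact hpc
    exact ⟨l, by rw [← hc', ← hpe]; exact hp⟩
  obtain ⟨c, hc1, hc2, hfree⟩ := hfree
  refine ⟨c, hc1, hc2, ⟨?_, hom_insert hg.2 ?_ ?_ ?_⟩⟩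
  · intro p hp
    rcases Finset.mem_insert.1 hp with hp | hp
    · exact Or.inl ⟨by rw [hp], by rw [hp]; exact ⟨c, hc1, hc2, rfl⟩⟩
    · exact hg.1 p hp
  · simp [GD_color, GS_color, Ga, xv]
  · intro y' hy'
    exact absurd hy' (hdom y')
  · intro q hq hadj
    have hne : xv ≠ q.1 := hadj.2.2.1
    rcases Sadj_elim hadj with ⟨-, hq0⟩ | ⟨-, hq1, -⟩ | ⟨-, hxv1, -⟩
    · rcases hg.1 q hq with ⟨hpx, -⟩ | ⟨l, c', h1', h2', h3', hpe⟩ | ⟨hmem, -⟩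
      · exact absurd hpx.symm hne
      · rw [hpe]
        refine Dadj_Ga_Vv hc1 hc2 h1' h2' h3' (Or.inr ?_)
        have hbf := hfree q hq
        rw [hpe, blockfn_blind h1'] at hbf
        exact hbf
      · rw [hmem.1] at hq0; omega
    · obtain ⟨hmem, hpe⟩ := fam_y_pair hg hq hq1
      obtain ⟨j, hj, hform⟩ := hβ q.1 hmem
      rw [hpe, hform]
      exact Dadj_Ga_ydv hc1 hc2 hmem.2.1 hmem.2.2.1 hj
    · exact absurd hxv1 (by simp [xv])

end InitGadget

namespace InitGadget
open PebbleCG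

variable {k n m : ℕ} {a b : ℕ → ℕ} {β : V3 → V4} {X1 : V4 → Prop}

lemma fam_z_extend {g : Pos} (hg : g ∈ Fam k n m a b X1 β) (hcard : g.card ≤ k)
    {l : ℕ} (hl1 : 1 ≤ l) (hlk : l ≤ k+1)
    (hdom : ∀ y', (zv l, y') ∉ g)
    (HX1z : ∀ t, X1 t → ∀ c, c ≤ k → (c = 0 ∨ c ≠ blockfn (xv, t)) →
      Dadj k m b t (Vv l c)) :
    ∃ c, c ≤ k ∧ insert (zv l, Vv l c) g ∈ Fam k n m a b X1 β := by
  have main : ∀ c, c ≤ k →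
      (∀ q ∈ g, Sadj k n a (zv l) q.1 → Dadj k m b (Vv l c) q.2) →
      insert (zv l, Vv l c) g ∈ Fam k n m a b X1 β := by
    intro c hck hadj
    refine ⟨?_, hom_insert hg.2 ?_ ?_ hadj⟩
    · intro p hp
      rcases Finset.mem_insert.1 hp with hp | hp
      · exact Or.inr (Or.inl ⟨l, c, hl1, hlk, hck, hp⟩)
      · exact hg.1 p hp
    · simp [GD_color, GS_color, Vv, zv]
    · intro y' hy'
      exact absurd hy' (hdom y')
  by_cases hw : ∃ w, 1 ≤ w ∧ (zv w, Vv w 0) ∈ g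
  · -- a wild pair is present: pick a fresh nonzero value
    obtain ⟨w, hw1, hwmem⟩ := hw
    have h0 : blockfn (zv w, Vv w 0) = 0 := blockfn_blind hw1
    obtain ⟨c, hc1, hc2, hfree⟩ := exists_free_val hcard hwmem h0
    refine ⟨c, hc2, main c hc2 ?_⟩
    intro q hq hadj
    rcases Sadj_elim hadj with ⟨-, hq0⟩ | ⟨hzx, -⟩ | ⟨-, hz1, -⟩
    · rcases hg.1 q hq with ⟨hpx, ht⟩ | ⟨w', c', h1', h2', h3', hpe⟩ | ⟨hmem, -⟩
      · have := HX1z q.2 ht c hc2 (Or.inr (by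
          have hbf := hfree q hq
          have : blockfn (xv, q.2) = blockfn q := rfl
          rw [this]; exact fun e => hbf e.symm))
        exact Dadj_symm this
      · have hwl : w' ≠ l := by
          intro e; subst e
          exact hdom _ (hpe ▸ hq)
        have hbf := hfree q hq
        rw [hpe, blockfn_blind h1'] at hbf
        rw [hpe]
        refine Dadj_symm (Dadj_Vv_Vv h1' h2' h3' hl1 hlk hc2 hwl ?_ ?_)
        · omega
        · rcases Nat.eq_zero_or_pos c' with h | h
          · exact Or.inl h
          · exact Or.inr (Or.inr hbf)
      · rw [hmem.1] at hq0; omega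
    · simp only [zv, xv, Prod.ext_iff] at hzx; omega
    · simp [zv] at hz1
  · -- no wild pair: the wild value works
    push_neg at hw
    refine ⟨0, by omega, main 0 (by omega) ?_⟩
    intro q hq hadj
    rcases Sadj_elim hadj with ⟨-, hq0⟩ | ⟨hzx, -⟩ | ⟨-, hz1, -⟩
    · rcases hg.1 q hq with ⟨hpx, ht⟩ | ⟨w', c', h1', h2', h3', hpe⟩ | ⟨hmem, -⟩
      · exact Dadj_symm (HX1z q.2 ht 0 (by omega) (Or.inl rfl))
      · have hwl : w' ≠ l := by
          intro e; subst e
          exact hdom _ (hpe ▸ hq)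
        have hc'0 : c' ≠ 0 := by
          intro e; subst e
          exact hw w' h1' (hpe ▸ hq)
        rw [hpe]
        refine Dadj_symm (Dadj_Vv_Vv h1' h2' h3' hl1 hlk (by omega) hwl ?_ ?_)
        · omega
        · exact Or.inr (Or.inl rfl)
      · rw [hmem.1] at hq0; omega
    · simp only [zv, xv, Prod.ext_iff] at hzx; omega
    · simp [zv] at hz1

end InitGadget

namespace InitGadget
open PebbleCG

variable {k n m : ℕ} {a b : ℕ → ℕ} {β : V3 → V4}

lemma SSet_finite : (SSet k n).Finite := by
  apply Set.Finite.subset (Set.finite_Icc ((0,0,0) : V3) (1, k+1, n))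
  rintro v (⟨l, hl, rfl⟩ | hv)
  · constructor <;> simp [zv, Prod.le_def] <;> omega
  · obtain ⟨h1, h2, h3, h4, h5⟩ := hv
    constructor <;> simp [Prod.le_def] <;> omega

lemma DSet_finite : (DSet k m).Finite := by
  apply Set.Finite.subset (Set.finite_Icc ((0,0,0,0) : V4) (1, k+1, m+k+1, k))
  rintro v (rfl | ⟨c, hc1, hc2, rfl⟩ | ⟨l, c, h1, h2, h3, rfl⟩ | hv)
  · constructor <;> simp [T1, Prod.le_def]
  · constructor <;> simp [Ga, Prod.le_def] <;> omega
  · constructor <;> simp [Vv, Prod.le_def] <;> omega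
  · obtain ⟨h1, h2, h3, h4, h5⟩ := hv
    constructor <;> simp [Prod.le_def] <;> omega

lemma mem_SSet_elim {v : V3} (h : v ∈ SSet k n) :
    (∃ l, l ≤ k+1 ∧ v = zv l) ∨ v ∈ initBdryYS k n := h

lemma zv_zero : zv 0 = xv := rfl

section strategies

lemma Ifam_winning (hwf : ∀ i, 1 ≤ i → i ≤ k → 1 ≤ a i ∧ a i ≤ n ∧ 1 ≤ b i ∧ b i ≤ m) :
    IsCriticalStrategy (GS k n a) (GD k m b) (SSet k n) (DSet k m) (k+1)
      (IFam k n m a b) ∅ := by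
  have hgood : GoodBd k n m (hyInit a b ∅) :=
    goodBd_hyInit (fun i h1 h2 => (hwf i h1 h2).2.2.2)
  have hX1D : ∀ t, X1I t → t ∈ DSet k m := by
    rintro t rfl; exact mem_DSet_T1
  refine ⟨⟨∅, fam_empty⟩, Set.empty_subset _, ?_, fun p hp => hp.2,
    fun p hp => absurd hp (Set.notMem_empty p), ?_, ?_⟩
  · intro p hp z hz
    exact fam_mem_SD hp hX1D hgood hz
  · intro p hp q hq
    exact fam_downward hp hq
  · intro g hg _ hcard x hx
    rcases mem_SSet_elim hx with ⟨l, hl, rfl⟩ | hx'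
    · rcases Nat.eq_zero_or_pos l with rfl | hl1
      · exact ⟨T1, mem_DSet_T1, Ifam_x1_extend hwf hg⟩
      · by_cases hdom : ∃ y', (zv l, y') ∈ g
        · obtain ⟨y', hy'⟩ := hdom
          refine ⟨y', (fam_mem_SD hg hX1D hgood hy').2, ?_⟩
          rw [fam_reinsert hg hy']
          exact hg
        · push_neg at hdom
          have HX1z : ∀ t, X1I t → ∀ c, c ≤ k → (c = 0 ∨ c ≠ blockfn (xv, t)) →
              Dadj k m b t (Vv l c) := by
            rintro t rfl c hck _
            exact Dadj_T1_Vv hl1 hl hck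
          obtain ⟨c, hck, hins⟩ := fam_z_extend hg (by omega) hl1 hl hdom HX1z
          exact ⟨Vv l c, mem_DSet_Vv hl1 hl hck, hins⟩
    · refine ⟨hyInit a b ∅ x, mem_bdD_DSet (hyInit_mem_bdD
        (fun i h1 h2 => (hwf i h1 h2).2.2.2) hx'), ?_⟩
      refine fam_bd_extend hg hgood hx' ?_
      rintro t rfl hacol
      have hval : hyInit a b ∅ x = ydv x.2.1 (b x.2.1) := by
        rw [hyInit_acol' hacol, hx'.1, ydv]
      rw [hval]
      exact Dadj_T1_ydv hx'.2.1 hx'.2.2.1 (hwf _ hx'.2.1 hx'.2.2.1).2.2.2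

lemma Ifam_bdfun :
    HasBoundaryFun (IFam k n m a b) (initBdryYS k n) (hyInit a b ∅) := by
  intro h hh z hz y hy
  exact (fam_y_pair hh hy hz.1).2

lemma Hfam_critical (hgood : GoodBd k n m β) :
    IsCriticalStrategy (GS k n a) (GD k m b) (SSet k n) (DSet k m) (k+1)
      (HFam k n m a b β) (Crit k n m a b β) := by
  have hX1D : ∀ t, X1H k t → t ∈ DSet k m := by
    rintro t ⟨c, hc1, hc2, rfl⟩; exact mem_DSet_Ga hc1 hc2
  refine ⟨⟨∅, fam_empty⟩, fun g hg => hg.1, ?_, fun p hp => hp.2,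
    fun p hp => by rw [hp.2.1]; omega, ?_, ?_⟩
  · intro p hp z hz
    exact fam_mem_SD hp hX1D hgood hz
  · intro p hp q hq
    exact fam_downward hp hq
  · intro g hg hcrit hcard x hx
    rcases mem_SSet_elim hx with ⟨l, hl, rfl⟩ | hx'
    · rcases Nat.eq_zero_or_pos l with rfl | hl1
      · by_cases hdom : ∃ y', (xv, y') ∈ g
        · obtain ⟨y', hy'⟩ := hdom
          refine ⟨y', (fam_mem_SD hg hX1D hgood hy').2, ?_⟩
          rw [zv_zero, fam_reinsert hg hy']
          exact hg
        · push_neg at hdom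
          obtain ⟨c, hc1, hc2, hins⟩ :=
            Hfam_x1_extend hgood hg (by omega) hdom hcrit
          rw [zv_zero]
          exact ⟨Ga c, mem_DSet_Ga hc1 hc2, hins⟩
      · by_cases hdom : ∃ y', (zv l, y') ∈ g
        · obtain ⟨y', hy'⟩ := hdom
          refine ⟨y', (fam_mem_SD hg hX1D hgood hy').2, ?_⟩
          rw [fam_reinsert hg hy']
          exact hg
        · push_neg at hdom
          have HX1z : ∀ t, X1H k t → ∀ c, c ≤ k → (c = 0 ∨ c ≠ blockfn (xv, t)) →
              Dadj k m b t (Vv l c) := by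
            rintro t ⟨c₀, hc₀1, hc₀2, rfl⟩ c hck hcond
            refine Dadj_Ga_Vv hc₀1 hc₀2 hl1 hl hck ?_
            rcases hcond with rfl | hcond
            · exact Or.inl rfl
            · rw [blockfn_Ga] at hcond
              exact Or.inr hcond
          obtain ⟨c, hck, hins⟩ := fam_z_extend hg (by omega) hl1 hl hdom HX1z
          exact ⟨Vv l c, mem_DSet_Vv hl1 hl hck, hins⟩
    · obtain ⟨j, hj, hform⟩ := hgood x hx'
      refine ⟨β x, ?_, ?_⟩
      · rw [hform]
        exact mem_bdD_DSet ⟨rfl, hx'.2.1, hx'.2.2.1, hj, rfl⟩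
      · refine fam_bd_extend hg hgood hx' ?_
        rintro t ⟨c₀, hc₀1, hc₀2, rfl⟩ -
        rw [hform]
        exact Dadj_Ga_ydv hc₀1 hc₀2 hx'.2.1 hx'.2.2.1 hj

lemma Hfam_bdfun :
    HasBoundaryFun (HFam k n m a b β) (initBdryYS k n) β := by
  intro h hh z hz y hy
  exact (fam_y_pair hh hy hz.1).2

lemma Crit_subset_IFam {g : Pos} (hg : g ∈ Crit k n m a b β) : g ∈ IFam k n m a b := by
  refine ⟨?_, hg.1.2⟩
  intro p hp
  obtain ⟨l, c, h1, h2, h3, h4, hpe⟩ := hg.2.2.1 p hp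
  exact Or.inr (Or.inl ⟨l, c, h1, h2, h4, hpe⟩)

end strategies
end InitGadget

namespace InitGadget
open PebbleCG

variable {k n m : ℕ} {a b : ℕ → ℕ}

def qY (k : ℕ) (a b : ℕ → ℕ) : Pos :=
  (Finset.Icc 1 k).image fun i => (ysv i (a i), ydv i (b i))

def Qpart (a b : ℕ → ℕ) (j : ℕ) : Pos :=
  (Finset.Icc 1 j).image fun i => (ysv i (a i), ydv i (b i))

abbrev Reach (k n m : ℕ) (a b : ℕ → ℕ) (p q : Pos) : Prop :=
  SpoilerReach (GS k n a) (GD k m b) (SSet k n) (DSet k m) (k+1) p q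

lemma reach_win_color {p q : Pos} {x : V3} {bb : V4}
    (h : (GD k m b).color bb ≠ (GS k n a).color x) :
    Reach k n m a b (insert (x, bb) p) q :=
  SpoilerReach.win (not_hom_color (Finset.mem_insert_self _ _) h)

lemma reach_win_edge {p q : Pos} {x : V3} {bb : V4} {u : V3} {v : V4}
    (hmem : (u, v) ∈ p) (ha : Sadj k n a x u) (hb : ¬ Dadj k m b bb v) :
    Reach k n m a b (insert (x, bb) p) q :=
  SpoilerReach.win
    (not_hom_edge (Finset.mem_insert_self _ _) (Finset.mem_insert_of_mem hmem) ha hb)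

lemma reach_win_fun {p q : Pos} {x : V3} {bb y' : V4}
    (hmem : (x, y') ∈ p) (hne : bb ≠ y') :
    Reach k n m a b (insert (x, bb) p) q :=
  SpoilerReach.win
    (not_hom_fun (Finset.mem_insert_self _ _) (Finset.mem_insert_of_mem hmem) hne)

lemma mem_DSet_elim {v : V4} (h : v ∈ DSet k m) :
    v = T1 ∨ (∃ c, 1 ≤ c ∧ c ≤ k ∧ v = Ga c) ∨
    (∃ l c, 1 ≤ l ∧ l ≤ k+1 ∧ c ≤ k ∧ v = Vv l c) ∨
    (∃ i j, 1 ≤ i ∧ i ≤ k ∧ j ≤ m ∧ v = ydv i j) := by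
  rcases h with h | h | h | h
  · exact Or.inl h
  · exact Or.inr (Or.inl h)
  · exact Or.inr (Or.inr (Or.inl h))
  · refine Or.inr (Or.inr (Or.inr ⟨v.2.1, v.2.2.1, h.2.1, h.2.2.1, h.2.2.2.1, ?_⟩))
    obtain ⟨h1, -, -, -, h5⟩ := h
    rw [ydv, ← h1, ← h5]

lemma Qpart_card_le (j : ℕ) : (Qpart a b j).card ≤ j := by
  calc (Qpart a b j).card ≤ (Finset.Icc 1 j).card := Finset.card_image_le
  _ = j := by rw [Nat.card_Icc]; omega

lemma Icc_succ_one (j : ℕ) : Finset.Icc 1 (j+1) = insert (j+1) (Finset.Icc 1 j) := by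
  ext x
  simp only [Finset.mem_Icc, Finset.mem_insert]
  omega

lemma Qpart_succ (j : ℕ) :
    Qpart a b (j+1) = insert (ysv (j+1) (a (j+1)), ydv (j+1) (b (j+1))) (Qpart a b j) := by
  unfold Qpart
  rw [Icc_succ_one, Finset.image_insert]

lemma qY_eq_Qpart : qY k a b = Qpart a b k := rfl

lemma color_zv (l : ℕ) : (GS k n a).color (zv l) = (0, l) := rfl
lemma color_ysv (i j : ℕ) : (GS k n a).color (ysv i j) = (1, i) := rfl
lemma color_xv : (GS k n a).color xv = (0, 0) := rfl
lemma color_T1 : (GD k m b).color T1 = (0, 0) := rfl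
lemma color_Ga (c : ℕ) : (GD k m b).color (Ga c) = (0, 0) := rfl
lemma color_Vv (l c : ℕ) : (GD k m b).color (Vv l c) = (0, l) := rfl
lemma color_ydv (i j : ℕ) : (GD k m b).color (ydv i j) = (1, i) := rfl

-- Phase Q: from any position containing (xv, T1) Spoiler reaches qY.
lemma phaseQ (hwf : ∀ i, 1 ≤ i → i ≤ k → 1 ≤ a i ∧ a i ≤ n ∧ 1 ≤ b i ∧ b i ≤ m)
    (hk : 2 ≤ k) :
    ∀ N j, j + N = k → ∀ p : Pos, insert (xv, T1) (Qpart a b j) ⊆ p →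
    Reach k n m a b p (qY k a b) := by
  intro N
  induction N with
  | zero =>
    intro j hj p hsub
    have hjk : j = k := by omega
    rw [hjk] at hsub
    have hq : qY k a b ⊆ p := by
      rw [qY_eq_Qpart]
      exact fun t ht => hsub (Finset.mem_insert_of_mem ht)
    refine SpoilerReach.move (qY k a b) (ysv 1 (a 1)) hq ?_ ?_ ?_
    · have := Qpart_card_le (a := a) (b := b) k
      rw [← qY_eq_Qpart] at this
      omega
    · exact mem_SSet_ysv (by omega) (by omega) (hwf 1 (by omega) (by omega)).1
        (hwf 1 (by omega) (by omega)).2.1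
    · intro bb hbb
      have h1y : (ysv 1 (a 1), ydv 1 (b 1)) ∈ qY k a b := by
        apply Finset.mem_image_of_mem
        rw [Finset.mem_Icc]; omega
      rcases mem_DSet_elim hbb with rfl | ⟨c, hc1, hc2, rfl⟩ |
        ⟨l, c, hl1, hl2, hc, rfl⟩ | ⟨i, j', hi1, hi2, hj', rfl⟩
      · exact reach_win_color (by simp [color_T1, color_ysv, Prod.ext_iff])
      · exact reach_win_color (by simp [color_Ga, color_ysv, Prod.ext_iff])
      · exact reach_win_color (by simp [color_Vv, color_ysv, Prod.ext_iff])
      · by_cases hieq : i = 1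
        · subst hieq
          by_cases hjeq : j' = b 1
          · subst hjeq
            rw [Finset.insert_eq_self.2 h1y]
            exact SpoilerReach.refl
          · exact reach_win_fun h1y (by simp [ydv, Prod.ext_iff, hjeq])
        · exact reach_win_color (by simp [color_ydv, color_ysv, Prod.ext_iff, hieq])
  | succ N ih =>
    intro j hj p hsub
    have hjk : j + 1 ≤ k := by omega
    refine SpoilerReach.move (insert (xv, T1) (Qpart a b j))
      (ysv (j+1) (a (j+1))) hsub ?_ ?_ ?_
    · have := Qpart_card_le (a := a) (b := b) j
      have := Finset.card_insert_le ((xv, T1)) (Qpart a b j)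
      omega
    · exact mem_SSet_ysv (by omega) hjk (hwf (j+1) (by omega) hjk).1
        (hwf (j+1) (by omega) hjk).2.1
    · intro bb hbb
      rcases mem_DSet_elim hbb with rfl | ⟨c, hc1, hc2, rfl⟩ |
        ⟨l, c, hl1, hl2, hc, rfl⟩ | ⟨i, j', hi1, hi2, hj', rfl⟩
      · exact reach_win_color (by simp [color_T1, color_ysv, Prod.ext_iff])
      · exact reach_win_color (by simp [color_Ga, color_ysv, Prod.ext_iff])
      · exact reach_win_color (by simp [color_Vv, color_ysv, Prod.ext_iff])
      · by_cases hieq : i = j + 1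
        · subst hieq
          by_cases hjeq : j' = b (j+1)
          · subst hjeq
            have hrw : insert (ysv (j+1) (a (j+1)), ydv (j+1) (b (j+1)))
                (insert (xv, T1) (Qpart a b j)) = insert (xv, T1) (Qpart a b (j+1)) := by
              rw [Qpart_succ, Finset.insert_comm]
            rw [hrw]
            exact ih (j+1) (by omega) _ (Finset.Subset.refl _)
          · refine reach_win_edge (Finset.mem_insert_self _ _) ?_ ?_
            · exact Sadj_symm (Sadj_xy (by omega) hjk (hwf (j+1) (by omega) hjk).1
                (hwf (j+1) (by omega) hjk).2.1)
            · exact fun h => not_Dadj_T1_ydv (b := b) hjeq (Dadj_symm h)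
        · exact reach_win_color (by simp [color_ydv, color_ysv, Prod.ext_iff, hieq])

end InitGadget

namespace InitGadget
open PebbleCG

variable {k n m : ℕ} {a b : ℕ → ℕ}

def Bset (f : ℕ → ℕ) (j : ℕ) : Pos :=
  (Finset.Icc 1 j).image fun i => (zv i, Vv i (f i))

def Alive (k j : ℕ) (f : ℕ → ℕ) (c : ℕ) : Prop :=
  (∀ i, 1 ≤ i → i ≤ j → f i ≤ k ∧ f i ≠ c) ∧
  (∀ i i', 1 ≤ i → i ≤ j → 1 ≤ i' → i' ≤ j → i ≠ i' →
    ¬(f i = 0 ∧ f i' = 0) ∧ (f i ≠ 0 → f i ≠ f i'))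

lemma Bset_card_le (f : ℕ → ℕ) (j : ℕ) : (Bset f j).card ≤ j := by
  calc (Bset f j).card ≤ (Finset.Icc 1 j).card := Finset.card_image_le
  _ = j := by rw [Nat.card_Icc]; omega

lemma mem_Bset {f : ℕ → ℕ} {j i : ℕ} (h1 : 1 ≤ i) (h2 : i ≤ j) :
    (zv i, Vv i (f i)) ∈ Bset f j :=
  Finset.mem_image_of_mem _ (Finset.mem_Icc.2 ⟨h1, h2⟩)

lemma Bset_zero (f : ℕ → ℕ) : Bset f 0 = ∅ := by
  unfold Bset
  rw [Finset.Icc_eq_empty (by omega), Finset.image_empty]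

lemma Qpart_zero : Qpart a b 0 = ∅ := by
  unfold Qpart
  rw [Finset.Icc_eq_empty (by omega), Finset.image_empty]

lemma Bset_succ (f : ℕ → ℕ) (j c' : ℕ) :
    Bset (Function.update f (j+1) c') (j+1)
      = insert (zv (j+1), Vv (j+1) c') (Bset f j) := by
  unfold Bset
  rw [Icc_succ_one, Finset.image_insert, Function.update_self]
  congr 1
  apply Finset.image_congr
  intro i hi
  rw [Finset.mem_coe, Finset.mem_Icc] at hi
  dsimp only
  rw [Function.update_of_ne (by omega)]

lemma phaseQ_start (hwf : ∀ i, 1 ≤ i → i ≤ k → 1 ≤ a i ∧ a i ≤ n ∧ 1 ≤ b i ∧ b i ≤ m)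
    (hk : 2 ≤ k) {p : Pos} (hmem : (xv, T1) ∈ p) :
    Reach k n m a b p (qY k a b) := by
  refine phaseQ hwf hk k 0 (by omega) p ?_
  rw [Qpart_zero]
  intro t ht
  rcases Finset.mem_insert.1 ht with rfl | ht
  · exact hmem
  · exact absurd ht (Finset.notMem_empty t)

lemma phaseX (hwf : ∀ i, 1 ≤ i → i ≤ k → 1 ≤ a i ∧ a i ≤ n ∧ 1 ≤ b i ∧ b i ≤ m)
    (hk : 2 ≤ k) :
    ∀ N j f c, j + N = k → 1 ≤ c → c ≤ k → Alive k j f c →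
    Reach k n m a b (insert (xv, Ga c) (Bset f j)) (qY k a b) := by
  intro N
  induction N with
  | zero =>
    intro j f c hj hc1 hc2 halive
    have hjk : j = k := by omega
    -- there is a wild index
    have hwild : ∃ i₀, 1 ≤ i₀ ∧ i₀ ≤ j ∧ f i₀ = 0 := by
      by_contra h
      push_neg at h
      have hmaps : ∀ i ∈ Finset.Icc 1 j, f i ∈ (Finset.Icc 1 j).erase c := by
        intro i hi
        rw [Finset.mem_Icc] at hi
        obtain ⟨hfk, hfc⟩ := halive.1 i hi.1 hi.2
        have hf0 : f i ≠ 0 := h i hi.1 hi.2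
        rw [Finset.mem_erase, Finset.mem_Icc]
        exact ⟨hfc, by omega, by omega⟩
      have hinj : Set.InjOn f (Finset.Icc 1 j) := by
        intro i hi i' hi' he
        by_contra hne
        rw [Finset.mem_coe, Finset.mem_Icc] at hi hi'
        exact (halive.2 i i' hi.1 hi.2 hi'.1 hi'.2 hne).2 (h i hi.1 hi.2) he
      have hcard := Finset.card_le_card_of_injOn f hmaps hinj
      have hcm : c ∈ Finset.Icc 1 j := Finset.mem_Icc.2 ⟨hc1, by omega⟩
      rw [Finset.card_erase_of_mem hcm, Nat.card_Icc] at hcard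
      omega
    obtain ⟨i₀, hi₀1, hi₀2, hfi₀⟩ := hwild
    have hnw : ∀ i, 1 ≤ i → i ≤ j → i ≠ i₀ → f i ≠ 0 := by
      intro i h1 h2 hne e
      exact (halive.2 i i₀ h1 h2 hi₀1 hi₀2 hne).1 ⟨e, hfi₀⟩
    have hsurj : ∀ c'', 1 ≤ c'' → c'' ≤ k → c'' ≠ c →
        ∃ i, 1 ≤ i ∧ i ≤ j ∧ i ≠ i₀ ∧ f i = c'' := by
      intro c'' h1 h2 h3
      have hmaps : ∀ i ∈ (Finset.Icc 1 j).erase i₀,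
          f i ∈ (Finset.Icc 1 j).erase c := by
        intro i hi
        rw [Finset.mem_erase, Finset.mem_Icc] at hi
        obtain ⟨hfk, hfc⟩ := halive.1 i hi.2.1 hi.2.2
        have hf0 : f i ≠ 0 := hnw i hi.2.1 hi.2.2 hi.1
        rw [Finset.mem_erase, Finset.mem_Icc]
        exact ⟨hfc, by omega, by omega⟩
      have hinj : Set.InjOn f ((Finset.Icc 1 j).erase i₀) := by
        intro i hi i' hi' he
        by_contra hne
        rw [Finset.mem_coe, Finset.mem_erase, Finset.mem_Icc] at hi hi'
        exact (halive.2 i i' hi.2.1 hi.2.2 hi'.2.1 hi'.2.2 hne).2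
          (hnw i hi.2.1 hi.2.2 hi.1) he
      have himg : ((Finset.Icc 1 j).erase i₀).image f = (Finset.Icc 1 j).erase c := by
        apply Finset.eq_of_subset_of_card_le
        · intro x hx
          obtain ⟨i, hi, rfl⟩ := Finset.mem_image.1 hx
          exact hmaps i hi
        · rw [Finset.card_image_of_injOn hinj,
            Finset.card_erase_of_mem (Finset.mem_Icc.2 ⟨hc1, by omega⟩),
            Finset.card_erase_of_mem (Finset.mem_Icc.2 ⟨hi₀1, hi₀2⟩)]
      have hc'' : c'' ∈ ((Finset.Icc 1 j).erase i₀).image f := by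
        rw [himg, Finset.mem_erase, Finset.mem_Icc]
        exact ⟨h3, h1, by omega⟩
      obtain ⟨i, hi, hfi⟩ := Finset.mem_image.1 hc''
      rw [Finset.mem_erase, Finset.mem_Icc] at hi
      exact ⟨i, hi.2.1, hi.2.2, hi.1, hfi⟩
    -- first move: pebble z_{k+1}
    refine SpoilerReach.move (Bset f j) (zv (j+1)) (Finset.subset_insert _ _) ?_
      (mem_SSet_zv (by omega)) ?_
    · have := Bset_card_le f j; omega
    · intro bb hbb
      rcases mem_DSet_elim hbb with rfl | ⟨c₀, h1, h2, rfl⟩ |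
        ⟨l, c', hl1, hl2, hc', rfl⟩ | ⟨i, j', hi1, hi2, hj', rfl⟩
      · exact reach_win_color (by simp [color_T1, color_zv, Prod.ext_iff])
      · exact reach_win_color (by simp [color_Ga, color_zv, Prod.ext_iff])
      · by_cases hleq : l = j + 1
        · subst hleq
          rcases Nat.eq_zero_or_pos c' with rfl | hc'1
          · -- wild answer: conflicts with the wild pair at i₀
            refine reach_win_edge (u := zv i₀) (v := Vv i₀ (f i₀))
              (mem_Bset hi₀1 hi₀2) (Sadj_zz (by omega) (by omega) (by omega)) ?_
            rw [hfi₀]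
            exact not_Dadj_Vv_Vv_wild (by omega) hi₀1
          · by_cases hcc : c' = c
            · -- the value c is still free: continue to the final move
              rw [hcc]
              refine SpoilerReach.move
                (insert (zv (j+1), Vv (j+1) c)
                  ((Bset f j).erase (zv i₀, Vv i₀ (f i₀)))) xv ?_ ?_ mem_SSet_xv ?_
              · apply Finset.insert_subset_insert
                exact Finset.erase_subset _ _
              · have h1 := Bset_card_le f j
                have h2 : (zv i₀, Vv i₀ (f i₀)) ∈ Bset f j := mem_Bset hi₀1 hi₀2
                have h3 := Finset.card_erase_of_mem h2
                have h4 := Finset.card_insert_le (zv (j+1), Vv (j+1) c)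
                  ((Bset f j).erase (zv i₀, Vv i₀ (f i₀)))
                have h5 : 1 ≤ (Bset f j).card := Finset.card_pos.2 ⟨_, h2⟩
                omega
              · intro bb hbb2
                rcases mem_DSet_elim hbb2 with rfl | ⟨c₀, hg1, hg2, rfl⟩ |
                  ⟨l', c'', hl1', hl2', hc'', rfl⟩ | ⟨i, j', hi1', hi2', hj'', rfl⟩
                · -- T1 : go to phase Q
                  exact phaseQ_start hwf hk (Finset.mem_insert_self _ _)
                · -- Ga c₀ : blocked by the full cover
                  by_cases hc₀c : c₀ = c
                  · rw [hc₀c]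
                    refine reach_win_edge (u := zv (j+1)) (v := Vv (j+1) c)
                      (Finset.mem_insert_self _ _) (Sadj_xz (by omega) (by omega)) ?_
                    exact fun h => not_Dadj_Ga_Vv_same hc1 h
                  · obtain ⟨i, hia, hib, hic, hid⟩ := hsurj c₀ hg1 hg2 hc₀c
                    refine reach_win_edge (u := zv i) (v := Vv i (f i))
                      (Finset.mem_insert_of_mem (Finset.mem_erase.2 ⟨?_, mem_Bset hia hib⟩))
                      (Sadj_xz hia (by omega)) ?_
                    · intro e
                      apply hic
                      have h1 : (zv i : V3) = zv i₀ := congrArg Prod.fst e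
                      simpa [zv, Prod.ext_iff] using h1
                    · rw [hid]
                      exact fun h => not_Dadj_Ga_Vv_same hg1 h
                · exact reach_win_color
                    (by simp [color_Vv, color_xv, Prod.ext_iff]; omega)
                · exact reach_win_color (by simp [color_ydv, color_xv, Prod.ext_iff])
            · -- a non-free nonzero value: conflicts with the cover pair
              obtain ⟨i, hia, hib, hic, hid⟩ := hsurj c' hc'1 hc' hcc
              refine reach_win_edge (u := zv i) (v := Vv i (f i))
                (mem_Bset hia hib) (Sadj_zz (by omega) (by omega) (by omega)) ?_
              rw [hid]
              exact fun h => not_Dadj_Vv_Vv_same hc'1 hia (by omega) (Dadj_symm h)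
        · exact reach_win_color (by simp [color_Vv, color_zv, Prod.ext_iff, hleq])
      · exact reach_win_color (by simp [color_ydv, color_zv, Prod.ext_iff])
  | succ N ih =>
    intro j f c hj hc1 hc2 halive
    have hjk : j + 1 ≤ k := by omega
    refine SpoilerReach.move (insert (xv, Ga c) (Bset f j)) (zv (j+1))
      (Finset.Subset.refl _) ?_ (mem_SSet_zv (by omega)) ?_
    · have h1 := Bset_card_le f j
      have h2 := Finset.card_insert_le (xv, Ga c) (Bset f j)
      omega
    · intro bb hbb
      rcases mem_DSet_elim hbb with rfl | ⟨c₀, h1, h2, rfl⟩ |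
        ⟨l, c', hl1, hl2, hc', rfl⟩ | ⟨i, j', hi1, hi2, hj', rfl⟩
      · exact reach_win_color (by simp [color_T1, color_zv, Prod.ext_iff])
      · exact reach_win_color (by simp [color_Ga, color_zv, Prod.ext_iff])
      · by_cases hleq : l = j + 1
        · subst hleq
          by_cases hcc : c' = c
          · subst hcc
            refine reach_win_edge (u := xv) (v := Ga c')
              (Finset.mem_insert_self _ _) (Sadj_symm (Sadj_xz (by omega) (by omega))) ?_
            exact fun h => not_Dadj_Ga_Vv_same hc1 (Dadj_symm h)
          · rcases Nat.eq_zero_or_pos c' with rfl | hc'1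
            · -- wild answer
              by_cases hwild : ∃ i, 1 ≤ i ∧ i ≤ j ∧ f i = 0
              · obtain ⟨i, hia, hib, hic⟩ := hwild
                refine reach_win_edge (u := zv i) (v := Vv i (f i))
                  (Finset.mem_insert_of_mem (mem_Bset hia hib))
                  (Sadj_zz (by omega) (by omega) (by omega)) ?_
                rw [hic]
                exact not_Dadj_Vv_Vv_wild (by omega) hia
              · push_neg at hwild
                have hrw : insert (zv (j+1), Vv (j+1) 0) (insert (xv, Ga c) (Bset f j))
                    = insert (xv, Ga c) (Bset (Function.update f (j+1) 0) (j+1)) := by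
                  rw [Bset_succ, Finset.insert_comm]
                rw [hrw]
                refine ih (j+1) _ c (by omega) hc1 hc2 ⟨?_, ?_⟩
                · intro i hi1' hi2'
                  by_cases hieq : i = j + 1
                  · subst hieq
                    rw [Function.update_self]
                    omega
                  · rw [Function.update_of_ne hieq]
                    exact halive.1 i hi1' (by omega)
                · intro i i' ha1 ha2 ha3 ha4 hne
                  by_cases hieq : i = j + 1 <;> by_cases hieq' : i' = j + 1
                  · omega
                  · subst hieq
                    rw [Function.update_self, Function.update_of_ne hieq']
                    exact ⟨fun hh => hwild i' ha3 (by omega) hh.2, fun hh => absurd rfl hh⟩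
                  · subst hieq'
                    rw [Function.update_self, Function.update_of_ne hieq]
                    exact ⟨fun hh => hwild i ha1 (by omega) hh.1, fun hh => hh⟩
                  · rw [Function.update_of_ne hieq, Function.update_of_ne hieq']
                    exact halive.2 i i' ha1 (by omega) ha3 (by omega) hne
            · -- nonzero answer
              by_cases hdup : ∃ i, 1 ≤ i ∧ i ≤ j ∧ f i = c'
              · obtain ⟨i, hia, hib, hic⟩ := hdup
                refine reach_win_edge (u := zv i) (v := Vv i (f i))
                  (Finset.mem_insert_of_mem (mem_Bset hia hib))
                  (Sadj_zz (by omega) (by omega) (by omega)) ?_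
                rw [hic]
                exact fun h => not_Dadj_Vv_Vv_same hc'1 hia (by omega) (Dadj_symm h)
              · push_neg at hdup
                have hrw : insert (zv (j+1), Vv (j+1) c') (insert (xv, Ga c) (Bset f j))
                    = insert (xv, Ga c) (Bset (Function.update f (j+1) c') (j+1)) := by
                  rw [Bset_succ, Finset.insert_comm]
                rw [hrw]
                refine ih (j+1) _ c (by omega) hc1 hc2 ⟨?_, ?_⟩
                · intro i hi1' hi2'
                  by_cases hieq : i = j + 1
                  · subst hieq
                    rw [Function.update_self]
                    omega
                  · rw [Function.update_of_ne hieq]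
                    exact halive.1 i hi1' (by omega)
                · intro i i' ha1 ha2 ha3 ha4 hne
                  by_cases hieq : i = j + 1 <;> by_cases hieq' : i' = j + 1
                  · omega
                  · subst hieq
                    rw [Function.update_self, Function.update_of_ne hieq']
                    exact ⟨fun hh => absurd hh.1 (by omega),
                      fun _ hh => hdup i' ha3 (by omega) hh.symm⟩
                  · subst hieq'
                    rw [Function.update_self, Function.update_of_ne hieq]
                    exact ⟨fun hh => absurd hh.2 (by omega),
                      fun _ hh => hdup i ha1 (by omega) hh⟩
                  · rw [Function.update_of_ne hieq, Function.update_of_ne hieq']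
                    exact halive.2 i i' ha1 (by omega) ha3 (by omega) hne
        · exact reach_win_color (by simp [color_Vv, color_zv, Prod.ext_iff, hleq])
      · exact reach_win_color (by simp [color_ydv, color_zv, Prod.ext_iff])

end InitGadget

namespace InitGadget
open PebbleCG

variable {k n m : ℕ} {a b : ℕ → ℕ}

lemma reach_qY (hwf : ∀ i, 1 ≤ i → i ≤ k → 1 ≤ a i ∧ a i ≤ n ∧ 1 ≤ b i ∧ b i ≤ m)
    (hk : 2 ≤ k) : Reach k n m a b ∅ (qY k a b) := by
  refine SpoilerReach.move ∅ xv (Finset.Subset.refl _) (by simp) mem_SSet_xv ?_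
  intro bb hbb
  rcases mem_DSet_elim hbb with rfl | ⟨c, hc1, hc2, rfl⟩ |
    ⟨l, c, hl1, hl2, hc, rfl⟩ | ⟨i, j', hi1, hi2, hj', rfl⟩
  · exact phaseQ_start hwf hk (Finset.mem_insert_self _ _)
  · have h0 : insert (xv, Ga c) (∅ : Pos)
        = insert (xv, Ga c) (Bset (fun _ => 0) 0) := by rw [Bset_zero]
    rw [h0]
    refine phaseX hwf hk k 0 _ c (by omega) hc1 hc2 ⟨?_, ?_⟩
    · intro i h1 h2; omega
    · intro i i' h1 h2 h3 h4 h5; omega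
  · exact reach_win_color (by simp [color_Vv, color_xv, Prod.ext_iff]; omega)
  · exact reach_win_color (by simp [color_ydv, color_xv, Prod.ext_iff])

end InitGadget



/-- for all `k ≥ 2`, `n, m ≥ 1` and every valid configuration
`q = (a,b,∅)` there is a gadget `INIT = (INIT_S, INIT_D)` — a pair of finite
vertex-colored graphs whose boundary is an output block of `y`-vertices, colored per
block and matched between the two sides — such that in the existential `(k+1)`-pebble
game on `INIT`: (i) Spoiler can reach `q on y` from the empty position; (ii) Duplicator
has a winning strategy `I` with boundary function `h^y_q`; and (iii) for every
configuration `q'` Duplicator has a critical strategy `I_{q'}` with boundary function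
`h^y_{q'}` whose critical positions all belong to `I`. -/
theorem initialization_gadget_exists (k n m : ℕ) (hk : 2 ≤ k) (hn : 1 ≤ n) (hm : 1 ≤ m)
    (a b : ℕ → ℕ)
    (hwf : ∀ i, 1 ≤ i → i ≤ k → 1 ≤ a i ∧ a i ≤ n ∧ 1 ≤ b i ∧ b i ≤ m) :
    ∃ (GS : ColoredGraph (ℕ × ℕ × ℕ) (ℕ × ℕ)) (GD : ColoredGraph (ℕ × ℕ × ℕ × ℕ) (ℕ × ℕ))
      (S : Set (ℕ × ℕ × ℕ)) (D : Set (ℕ × ℕ × ℕ × ℕ)),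
      -- the gadget is finite
      S.Finite ∧ D.Finite ∧
      -- the output block is part of the gadget and is its boundary
      initBdryYS k n ⊆ S ∧ initBdryYD k m ⊆ D ∧
      -- all edges lie inside the gadget
      (∀ u v, GS.graph.Adj u v → u ∈ S ∧ v ∈ S) ∧
      (∀ u v, GD.graph.Adj u v → u ∈ D ∧ v ∈ D) ∧
      -- the output block is colored per block, matched between the two sides,
      -- and its colors occur nowhere else in the gadget
      (∀ v ∈ initBdryYS k n, GS.color v = (1, v.2.1)) ∧
      (∀ v ∈ initBdryYD k m, GD.color v = (1, v.2.1)) ∧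
      (∀ v ∈ S, (GS.color v).1 = 1 → v ∈ initBdryYS k n) ∧
      (∀ v ∈ D, (GD.color v).1 = 1 → v ∈ initBdryYD k m) ∧
      -- (i) Spoiler can reach `q on y` from the empty position
      PebbleCG.SpoilerReach GS GD S D (k + 1) (∅ : Finset ((ℕ × ℕ × ℕ) × ℕ × ℕ × ℕ × ℕ))
        ((Finset.Icc 1 k).image fun i => ((1, i, a i), (1, i, b i, 0))) ∧
      -- (ii) and (iii)
      ∃ I : Set (Finset ((ℕ × ℕ × ℕ) × ℕ × ℕ × ℕ × ℕ)),
        PebbleCG.IsCriticalStrategy GS GD S D (k + 1) I ∅ ∧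
        PebbleCG.HasBoundaryFun I (initBdryYS k n) (hyInit a b ∅) ∧
        ∀ (a' b' : ℕ → ℕ) (T' : Set ℕ),
          (∀ i, 1 ≤ i → i ≤ k → 1 ≤ a' i ∧ a' i ≤ n ∧ 1 ≤ b' i ∧ b' i ≤ m) →
          T' ⊆ Set.Icc 1 k →
          ∃ I' crit' : Set (Finset ((ℕ × ℕ × ℕ) × ℕ × ℕ × ℕ × ℕ)),
            PebbleCG.IsCriticalStrategy GS GD S D (k + 1) I' crit' ∧
            PebbleCG.HasBoundaryFun I' (initBdryYS k n) (hyInit a' b' T') ∧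
            crit' ⊆ I := by
  classical
  open InitGadget in
  refine ⟨InitGadget.GS k n a, InitGadget.GD k m b, SSet k n, DSet k m,
    SSet_finite, DSet_finite, fun v hv => mem_bdS_SSet hv, fun v hv => mem_bdD_DSet hv,
    fun u v h => ⟨h.1, h.2.1⟩, fun u v h => ⟨h.1, h.2.1⟩,
    ?_, ?_, ?_, ?_, ?_, ?_⟩
  · intro v hv
    show (v.1, v.2.1) = (1, v.2.1)
    rw [hv.1]
  · intro v hv
    show (v.1, v.2.1) = (1, v.2.1)
    rw [hv.1]
  · rintro v (⟨l, hl, rfl⟩ | hv) h1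
    · exact absurd h1 (by simp [zv, GS_color])
    · exact hv
  · rintro v (rfl | ⟨c, hc1, hc2, rfl⟩ | ⟨l, c, h1', h2', h3', rfl⟩ | hv) h1
    · exact absurd h1 (by simp [T1, GD_color])
    · exact absurd h1 (by simp [Ga, GD_color])
    · exact absurd h1 (by simp [Vv, GD_color])
    · exact hv
  · exact reach_qY hwf hk
  · refine ⟨IFam k n m a b, Ifam_winning hwf, Ifam_bdfun, ?_⟩
    intro a' b' T' hwf' hT'
    have hgood : GoodBd k n m (hyInit a' b' T') :=
      goodBd_hyInit (fun i h1 h2 => (hwf' i h1 h2).2.2.2)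
    exact ⟨HFam k n m a b (hyInit a' b' T'), Crit k n m a b (hyInit a' b' T'),
      Hfam_critical hgood, Hfam_bdfun, fun g hg => Crit_subset_IFam hg⟩
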